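/- The map ε ↦ JS(p, p + ε·v), for a strictly positive probability mass function p on a finite set and a perturbation v with ∑_x v(x) = 0, has vanishing value and vanishing first derivative at ε = 0, and its second derivative at ε = 0 equals (1/4) ∑_x v(x)²/p(x). -/

import Mathlib

open scoped BigOperators

lemma term_hasDerivAt (a w : ℝ) (ha : 0 < a) {ε : ℝ} (hq : 0 < a + ε * w) :
    HasDerivAt (fun t : ℝ =>
      1/2 * (a * Real.log (a / ((a + (a + t * w)) / 2))) +
      1/2 * ((a + t * w) * Real.log ((a + t * w) / ((a + (a + t * w)) / 2))))
      (1/2 * w * Real.log ((a + ε * w) / ((a + (a + ε * w)) / 2))) ε := by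
  have hm : 0 < (a + (a + ε * w)) / 2 := div_pos (by linarith) two_pos
  have hQ : HasDerivAt (fun t : ℝ => a + t * w) w ε := by
    simpa using ((hasDerivAt_id ε).mul_const w).const_add a
  have hM : HasDerivAt (fun t : ℝ => (a + (a + t * w)) / 2) (w / 2) ε :=
    (hQ.const_add a).div_const 2
  have hAM := (hasDerivAt_const ε a).div hM hm.ne'
  have hQM := hQ.div hM hm.ne'
  have hlog1 := (Real.hasDerivAt_log (div_pos ha hm).ne').comp ε hAM
  have hlog2 := (Real.hasDerivAt_log (div_pos hq hm).ne').comp ε hQM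
  have htot := ((hlog1.const_mul a).const_mul (1/2 : ℝ)).add
    ((hQ.mul hlog2).const_mul (1/2 : ℝ))
  refine htot.congr_deriv ?_
  simp only [Function.comp_apply, Pi.div_apply]
  field_simp
  ring

lemma term2_hasDerivAt (a w : ℝ) (ha : 0 < a) :
    HasDerivAt (fun t : ℝ =>
      1/2 * w * Real.log ((a + t * w) / ((a + (a + t * w)) / 2)))
      (w ^ 2 / (4 * a)) 0 := by
  have hq : 0 < a + (0:ℝ) * w := by simpa using ha
  have hm : 0 < (a + (a + (0:ℝ) * w)) / 2 := div_pos (by linarith) two_pos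
  have hQ : HasDerivAt (fun t : ℝ => a + t * w) w (0:ℝ) := by
    simpa using ((hasDerivAt_id (0:ℝ)).mul_const w).const_add a
  have hM : HasDerivAt (fun t : ℝ => (a + (a + t * w)) / 2) (w / 2) (0:ℝ) :=
    (hQ.const_add a).div_const 2
  have hQM := hQ.div hM hm.ne'
  have hlog2 := (Real.hasDerivAt_log (div_pos hq hm).ne').comp 0 hQM
  have htot := hlog2.const_mul (1/2 * w : ℝ)
  refine htot.congr_deriv ?_
  simp only [zero_mul, add_zero]
  field_simp
  ring

/-- Kullback–Leibler divergence. -/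
noncomputable def KLdiv {X : Type*} [Fintype X] (u v : X → ℝ) : ℝ :=
  ∑ x, u x * Real.log (u x / v x)

/-- Jensen–Shannon divergence. -/
noncomputable def JSdiv {X : Type*} [Fintype X] (p q : X → ℝ) : ℝ :=
  (1 / 2) * KLdiv p (fun x => (p x + q x) / 2) +
  (1 / 2) * KLdiv q (fun x => (p x + q x) / 2)

/-- The map `ε ↦ JS(p, p + ε·v)` vanishes to first order at `ε = 0`, and its second
derivative there equals `(1/4) ∑_x v(x)²/p(x)`. -/
theorem js_derivatives_at_zero {X : Type*} [Fintype X] (p v : X → ℝ)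
    (hp_pos : ∀ x, 0 < p x) (hp_sum : ∑ x, p x = 1) (hv : ∑ x, v x = 0) :
    (fun ε : ℝ => JSdiv p (fun x => p x + ε * v x)) 0 = 0 ∧
    deriv (fun ε : ℝ => JSdiv p (fun x => p x + ε * v x)) 0 = 0 ∧
    deriv (deriv (fun ε : ℝ => JSdiv p (fun x => p x + ε * v x))) 0
      = (1 / 4) * ∑ x, v x ^ 2 / p x := by
  set f := fun ε : ℝ => JSdiv p (fun x => p x + ε * v x) with hf
  have hratio : ∀ x : X, ∀ ε : ℝ, ε = 0 →
      (p x + ε * v x) / ((p x + (p x + ε * v x)) / 2) = 1 := by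
    intro x ε hε
    rw [hε, zero_mul, add_zero, add_self_div_two, div_self (hp_pos x).ne']
  have hf_eq : f = fun ε => ∑ x,
      (1/2 * (p x * Real.log (p x / ((p x + (p x + ε * v x)) / 2))) +
       1/2 * ((p x + ε * v x) * Real.log ((p x + ε * v x) / ((p x + (p x + ε * v x)) / 2)))) := by
    funext ε
    simp [hf, JSdiv, KLdiv, Finset.mul_sum, ← Finset.sum_add_distrib]
  set g := fun ε : ℝ => ∑ x,
      1/2 * v x * Real.log ((p x + ε * v x) / ((p x + (p x + ε * v x)) / 2)) with hg
  have hpos : ∀ᶠ ε : ℝ in nhds 0, ∀ x, 0 < p x + ε * v x := by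
    rw [Filter.eventually_all]
    intro x
    have hc : ContinuousAt (fun ε : ℝ => p x + ε * v x) 0 := by fun_prop
    have h0 : (0:ℝ) < p x + 0 * v x := by simpa using hp_pos x
    exact hc.eventually (eventually_gt_nhds h0)
  have hfg : ∀ᶠ ε : ℝ in nhds 0, HasDerivAt f (g ε) ε := by
    filter_upwards [hpos] with ε hε
    rw [hf_eq]
    exact HasDerivAt.fun_sum fun x _ => term_hasDerivAt (p x) (v x) (hp_pos x) (hε x)
  have hg0 : g 0 = 0 := by
    apply Finset.sum_eq_zero
    intro x _
    rw [hratio x 0 rfl, Real.log_one, mul_zero]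
  have hderiv0 : deriv f 0 = 0 := by
    rw [hfg.self_of_nhds.deriv, hg0]
  have hderiv_eq : ∀ᶠ ε : ℝ in nhds 0, deriv f ε = g ε := by
    filter_upwards [hfg] with ε h using h.deriv
  have hg' : HasDerivAt g ((1/4) * ∑ x, v x ^ 2 / p x) 0 := by
    have h : HasDerivAt g (∑ x, v x ^ 2 / (4 * p x)) 0 :=
      HasDerivAt.fun_sum fun x _ => term2_hasDerivAt (p x) (v x) (hp_pos x)
    convert h using 1
    rw [Finset.mul_sum]
    refine Finset.sum_congr rfl fun x _ => ?_
    field_simp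
  have hd2 : deriv (deriv f) 0 = (1/4) * ∑ x, v x ^ 2 / p x := by
    rw [Filter.EventuallyEq.deriv_eq hderiv_eq, hg'.deriv]
  have hf0 : f 0 = 0 := by
    rw [hf_eq]
    apply Finset.sum_eq_zero
    intro x _
    rw [hratio x 0 rfl]
    have : p x / ((p x + (p x + 0 * v x)) / 2) = 1 := by
      rw [zero_mul, add_zero, add_self_div_two, div_self (hp_pos x).ne']
    rw [this, Real.log_one]
    ring
  exact ⟨hf0, hderiv0, by rw [hd2]⟩
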